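/- Let s ≥ 2 be an integer. The function g_s(x) = e^{−x} + (x/(s−1)) Σ_{j=1}^{s−1} e^{−(s−j)x/s} is nonincreasing on [0, ∞). -/

import Mathlib

lemma key_ineq (n : ℕ) (u : ℝ) :
    ∑ k ∈ Finset.Icc 1 n, (1 - (k:ℝ)*u) * Real.exp (-((k:ℝ)*u)) ≤
      (n:ℝ) * Real.exp (-(((n:ℝ)+1)*u)) := by
  induction n with
  | zero => simp
  | succ n ih =>
    rw [Finset.sum_Icc_succ_top (by omega)]
    have h1 : 1 - u ≤ Real.exp (-u) := by linarith [Real.add_one_le_exp (-u)]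
    have hpos : (0:ℝ) ≤ ((n:ℝ)+1) * Real.exp (-(((n:ℝ)+1)*u)) := by positivity
    have step : ((n:ℝ)+1) * (1-u) * Real.exp (-(((n:ℝ)+1)*u)) ≤
        ((n:ℝ)+1) * Real.exp (-(((n:ℝ)+1+1)*u)) := by
      have h2 := mul_le_mul_of_nonneg_right h1 hpos
      calc ((n:ℝ)+1) * (1-u) * Real.exp (-(((n:ℝ)+1)*u))
          = (1-u) * (((n:ℝ)+1) * Real.exp (-(((n:ℝ)+1)*u))) := by ring
        _ ≤ Real.exp (-u) * (((n:ℝ)+1) * Real.exp (-(((n:ℝ)+1)*u))) := h2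
        _ = ((n:ℝ)+1) * (Real.exp (-u) * Real.exp (-(((n:ℝ)+1)*u))) := by ring
        _ = ((n:ℝ)+1) * Real.exp (-(((n:ℝ)+1+1)*u)) := by
            rw [← Real.exp_add]; ring_nf
    push_cast
    have heq : (1 - ((n:ℝ)+1)*u) * Real.exp (-(((n:ℝ)+1)*u)) +
        (n:ℝ) * Real.exp (-(((n:ℝ)+1)*u)) =
        ((n:ℝ)+1) * (1-u) * Real.exp (-(((n:ℝ)+1)*u)) := by ring
    linarith [ih]

lemma reindex (s : ℕ) (f : ℝ → ℝ) :
    ∑ j ∈ Finset.Icc 1 (s-1), f (((s:ℝ) - j)) =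
      ∑ k ∈ Finset.Icc 1 (s-1), f (k:ℝ) := by
  apply Finset.sum_nbij' (i := fun j => s - j) (j := fun k => s - k)
  · intro a ha; simp only [Finset.mem_Icc] at *; omega
  · intro a ha; simp only [Finset.mem_Icc] at *; omega
  · intro a ha; simp only [Finset.mem_Icc] at *; omega
  · intro a ha; simp only [Finset.mem_Icc] at *; omega
  · intro a ha
    simp only [Finset.mem_Icc] at ha
    congr 1
    have h : a ≤ s := by omega
    push_cast [h]; ring

/-- The final-stage stability function of sIFRK(s,2):
`g_s(x) = e^{−x} + (x/(s−1)) Σ_{j=1}^{s−1} e^{−(s−j)x/s}` is nonincreasing on `[0, ∞)`. -/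
theorem stmt_13 (s : ℕ) (hs : 2 ≤ s) :
    AntitoneOn (fun x : ℝ =>
      Real.exp (-x) +
        (x / ((s : ℝ) - 1)) * ∑ j ∈ Finset.Icc 1 (s - 1), Real.exp (-(((s : ℝ) - j) * x) / s))
      (Set.Ici (0 : ℝ)) := by
  have hs0 : (0:ℝ) < s := by positivity
  have hsne : (s:ℝ) ≠ 0 := ne_of_gt hs0
  set c : ℝ := (s:ℝ) - 1 with hc
  have hcpos : 0 < c := by
    have : (2:ℝ) ≤ s := by exact_mod_cast hs
    simp only [hc]; linarith
  set b : ℕ → ℝ := fun j => -(((s:ℝ) - j)/s) with hb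
  have hfun : (fun x : ℝ =>
      Real.exp (-x) +
        (x / ((s : ℝ) - 1)) * ∑ j ∈ Finset.Icc 1 (s - 1), Real.exp (-(((s : ℝ) - j) * x) / s))
      = fun x : ℝ => Real.exp (-x) + (x / c) * ∑ j ∈ Finset.Icc 1 (s-1), Real.exp (b j * x) := by
    funext x
    congr 2
    apply Finset.sum_congr rfl
    intro j _
    congr 1
    simp only [hb]; ring
  rw [hfun]
  have hder : ∀ x : ℝ, HasDerivAt
      (fun x : ℝ => Real.exp (-x) + (x / c) * ∑ j ∈ Finset.Icc 1 (s-1), Real.exp (b j * x))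
      (Real.exp (-x) * (-1) +
        ((1/c) * (∑ j ∈ Finset.Icc 1 (s-1), Real.exp (b j * x)) +
          (x/c) * (∑ j ∈ Finset.Icc 1 (s-1), Real.exp (b j * x) * b j))) x := by
    intro x
    have h1 : HasDerivAt (fun x : ℝ => Real.exp (-x)) (Real.exp (-x) * (-1)) x := by
      simpa using ((hasDerivAt_id x).neg).exp
    have hS : HasDerivAt (fun x : ℝ => ∑ j ∈ Finset.Icc 1 (s-1), Real.exp (b j * x))
        (∑ j ∈ Finset.Icc 1 (s-1), Real.exp (b j * x) * b j) x := by
      apply HasDerivAt.fun_sum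
      intro j _
      have : HasDerivAt (fun y : ℝ => Real.exp (b j * y)) (Real.exp (b j * x) * b j) x := by
        simpa using ((hasDerivAt_id x).const_mul (b j)).exp
      exact this
    have hx : HasDerivAt (fun y : ℝ => y / c) (1/c) x := by
      simpa using (hasDerivAt_id x).div_const c
    exact h1.add (hx.mul hS)
  apply antitoneOn_of_deriv_nonpos (convex_Ici 0)
  · exact Continuous.continuousOn (by fun_prop)
  · intro x hx
    exact (hder x).differentiableAt.differentiableWithinAt
  · intro x hx
    rw [interior_Ici] at hx
    have hx0 : 0 ≤ x := le_of_lt hx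
    rw [(hder x).deriv]
    set u : ℝ := x / s with hu
    have hsu : (s:ℝ) * u = x := by rw [hu]; field_simp
    have hkey : (∑ j ∈ Finset.Icc 1 (s-1), (1 + x * b j) * Real.exp (b j * x)) ≤
        c * Real.exp (-x) := by
      have hterm : ∀ j ∈ Finset.Icc 1 (s-1),
          (1 + x * b j) * Real.exp (b j * x)
            = (1 - ((s:ℝ) - j) * u) * Real.exp (-((((s:ℝ) - j)) * u)) := by
        intro j _
        have e1 : x * b j = -(((s:ℝ) - j) * u) := by
          simp only [hb, hu]; field_simp
        have e2 : b j * x = -(((s:ℝ) - j) * u) := by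
          simp only [hb, hu]; field_simp
        rw [e1, e2]; ring_nf
      rw [Finset.sum_congr rfl hterm]
      have hre := reindex s (fun t => (1 - t * u) * Real.exp (-(t * u)))
      rw [hre]
      have hki := key_ineq (s-1) u
      have hcast : ((s-1:ℕ):ℝ) = c := by
        rw [Nat.cast_sub (by omega)]; simp [hc]
      have hcast2 : ((s-1:ℕ):ℝ) + 1 = (s:ℝ) := by
        rw [Nat.cast_sub (by omega)]; push_cast; ring
      rw [hcast2] at hki
      rw [hcast] at hki
      rw [hsu] at hki
      exact hki
    have h2 : (1/c) * (∑ j ∈ Finset.Icc 1 (s-1), (1 + x * b j) * Real.exp (b j * x)) ≤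
        Real.exp (-x) := by
      have h3 := mul_le_mul_of_nonneg_left hkey (le_of_lt (one_div_pos.mpr hcpos))
      calc (1/c) * (∑ j ∈ Finset.Icc 1 (s-1), (1 + x * b j) * Real.exp (b j * x))
          ≤ (1/c) * (c * Real.exp (-x)) := h3
        _ = Real.exp (-x) := by field_simp
    have hcomb : (1/c) * (∑ j ∈ Finset.Icc 1 (s-1), Real.exp (b j * x)) +
        (x/c) * (∑ j ∈ Finset.Icc 1 (s-1), Real.exp (b j * x) * b j)
        = (1/c) * (∑ j ∈ Finset.Icc 1 (s-1), (1 + x * b j) * Real.exp (b j * x)) := by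
      rw [Finset.mul_sum, Finset.mul_sum, Finset.mul_sum, ← Finset.sum_add_distrib]
      apply Finset.sum_congr rfl
      intro j _
      ring
    rw [hcomb]
    linarith [h2]
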